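/- The map D : (b₁, c₀, c₁) ↦ (1 - b₁, -c₁/(1+c₁), -c₀/(1+c₀)) is an involution on the set {(b₁,c₀,c₁) ∈ ℝ³ : 0 < b₁ < 1, b₁ - 1 < c₀ < (1-b₁)/b₁, -b₁ < c₁ < b₁/(1-b₁)}, i.e., D maps this set to itself and D∘D is the identity. -/

import Mathlib

/-- The parameter region (Cond) of the paper. -/
def condSet : Set (ℝ × ℝ × ℝ) :=
  {p | 0 < p.1 ∧ p.1 < 1 ∧ p.1 - 1 < p.2.1 ∧ p.2.1 < (1 - p.1) / p.1 ∧
    -p.1 < p.2.2 ∧ p.2.2 < p.1 / (1 - p.1)}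

/-- The dual-matrices map `D`. -/
noncomputable def dualMap (p : ℝ × ℝ × ℝ) : ℝ × ℝ × ℝ :=
  (1 - p.1, -p.2.2 / (1 + p.2.2), -p.2.1 / (1 + p.2.1))

/-- `D` is an involution on the region (Cond). -/
theorem dualMap_involution :
    ∀ p ∈ condSet, dualMap p ∈ condSet ∧ dualMap (dualMap p) = p := by
  rintro ⟨b, c₀, c₁⟩ ⟨hb0, hb1, hc0l, hc0r, hc1l, hc1r⟩
  simp only [condSet, dualMap, Set.mem_setOf_eq] at *
  have hb1' : (0:ℝ) < 1 - b := by linarith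
  have hc0r' : c₀ * b < 1 - b := (lt_div_iff₀ hb0).mp hc0r
  have hc1r' : c₁ * (1 - b) < b := (lt_div_iff₀ hb1').mp hc1r
  have h0 : (0:ℝ) < 1 + c₀ := by nlinarith
  have h1 : (0:ℝ) < 1 + c₁ := by nlinarith
  refine ⟨⟨by linarith, by linarith, ?_, ?_, ?_, ?_⟩, ?_⟩
  · rw [lt_div_iff₀ h1]; nlinarith
  · rw [div_lt_div_iff₀ h1 hb1']; nlinarith
  · rw [neg_lt, neg_div, neg_neg, div_lt_iff₀ h0]; nlinarith
  · rw [show (1:ℝ) - (1 - b) = b by ring, div_lt_div_iff₀ h0 hb0]; nlinarith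
  · have e1 : 1 + -c₁ / (1 + c₁) = 1 / (1 + c₁) := by field_simp; ring
    have e0 : 1 + -c₀ / (1 + c₀) = 1 / (1 + c₀) := by field_simp; ring
    simp only [e1, e0, Prod.mk.injEq]
    refine ⟨by ring, ?_, ?_⟩ <;> field_simp
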